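/- Let p ≥ 2 with |U| ≥ p, let f be a normalized, non-negative, monotone submodular set function on U, let λ ≥ 0, and let G_0 = ∅, G_{i+1} = G_i ∪ {u_{i+1}} for 0 ≤ i < p, where each u_{i+1} ∈ U∖G_i maximizes (1/2)(f(G_i∪{u}) − f(G_i)) + λ·Σ_{v∈G_i} d(u,v) over u ∈ U∖G_i. Then for every O ⊆ U with |O| = p and every index 0 ≤ i ≤ p−1 such that |O∖G_i| ≥ 2, writing C = O∖G_i, the following holds: Σ_{v∈C} [ (1/2)(f(G_i∪{v}) − f(G_i)) + λ·Σ_{u∈G_i} d(v,u) ] ≥ (1/2)·f(O) − (1/2)·f(G_p) + λ·(i·|C|/(p(p−1)))·d(O). -/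

import Mathlib

open Finset

lemma core_tri {U : Type*} [DecidableEq U] (d : U → U → ℝ)
    (hsymm : ∀ u v, d u v = d v u) (hrefl : ∀ u, d u u = 0)
    (htri : ∀ u v w, d u w ≤ d u v + d v w) (A B : Finset U) :
    (B.card : ℝ) * (∑ x ∈ A, ∑ w ∈ A, d x w) ≤
      2 * ((A.card : ℝ) - 1) * ∑ x ∈ A, ∑ v ∈ B, d x v := by
  rcases A.eq_empty_or_nonempty with rfl | hA
  · simp
  set s : U → ℝ := fun x => ∑ v ∈ B, d x v with hs
  have hdiag : ∑ x ∈ A, ∑ w ∈ A, d x w = ∑ x ∈ A, ∑ w ∈ A.erase x, d x w :=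
    sum_congr rfl fun x hx => (Finset.sum_erase _ (hrefl x)).symm
  have hstep1 : (B.card : ℝ) * (∑ x ∈ A, ∑ w ∈ A, d x w) ≤
      ∑ x ∈ A, ∑ w ∈ A.erase x, (s x + s w) := by
    rw [hdiag, Finset.mul_sum]
    refine Finset.sum_le_sum fun x hx => ?_
    rw [Finset.mul_sum]
    refine Finset.sum_le_sum fun w hw => ?_
    have h1 : (B.card : ℝ) * d x w = ∑ v ∈ B, d x w := by
      rw [Finset.sum_const, nsmul_eq_mul]
    rw [h1]
    have h2 : s x + s w = ∑ v ∈ B, (d x v + d v w) := by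
      rw [Finset.sum_add_distrib, hs]
      simp only [add_right_inj]
      exact Finset.sum_congr rfl fun v hv => (hsymm w v)
    rw [h2]
    exact Finset.sum_le_sum fun v hv => htri x v w
  have hstep2 : ∑ x ∈ A, ∑ w ∈ A.erase x, (s x + s w) =
      2 * ((A.card : ℝ) - 1) * ∑ x ∈ A, s x := by
    have h1 : ∀ x ∈ A, ∑ w ∈ A.erase x, (s x + s w) =
        ((A.card : ℝ) - 1) * s x + ((∑ w ∈ A, s w) - s x) := by
      intro x hx
      rw [Finset.sum_add_distrib, Finset.sum_const, nsmul_eq_mul,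
        Finset.card_erase_of_mem hx, Finset.sum_erase_eq_sub hx]
      have : ((A.card - 1 : ℕ) : ℝ) = (A.card : ℝ) - 1 := by
        have := hA.card_pos
        push_cast [Nat.cast_sub this]
        ring
      rw [this]
    rw [Finset.sum_congr rfl h1, Finset.sum_add_distrib, ← Finset.mul_sum,
      Finset.sum_sub_distrib, Finset.sum_const, nsmul_eq_mul]
    ring
  calc (B.card : ℝ) * (∑ x ∈ A, ∑ w ∈ A, d x w) ≤ _ := hstep1
    _ = _ := hstep2

lemma submod_sum {U : Type*} [DecidableEq U] (f : Finset U → ℝ)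
    (hfsub : ∀ (S T : Finset U) (u : U), S ⊆ T →
      f (insert u T) - f T ≤ f (insert u S) - f S)
    (Gi C : Finset U) :
    f (Gi ∪ C) - f Gi ≤ ∑ v ∈ C, (f (insert v Gi) - f Gi) := by
  induction C using Finset.induction_on with
  | empty => simp
  | @insert a C' ha ih =>
    rw [Finset.sum_insert ha]
    have h1 : Gi ∪ insert a C' = insert a (Gi ∪ C') := by
      rw [Finset.union_insert]
    have h2 : f (insert a (Gi ∪ C')) - f (Gi ∪ C') ≤ f (insert a Gi) - f Gi :=
      hfsub Gi (Gi ∪ C') a Finset.subset_union_left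
    rw [h1]; linarith

lemma key_alg (X Y DC DG c g i p : ℝ) (hX : 0 ≤ X) (hY : 0 ≤ Y)
    (hDC : 0 ≤ DC) (hDG : 0 ≤ DG) (hc : 2 ≤ c) (hg : 0 ≤ g) (hgi : g ≤ i)
    (hip : i + 1 ≤ p) (hcg : c + g = p)
    (h1 : g * DC ≤ (c - 1) * X) (h2 : (i - g) * DC ≤ (c - 1) * Y)
    (h3 : c * DG ≤ (g - 1) * X) :
    i * c * (DC + DG + X) ≤ p * (p - 1) * (X + Y) := by
  have hg' : g = p - c := by linarith
  subst hg'
  have hi0 : (0:ℝ) ≤ i := by linarith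
  have hp1 : (0:ℝ) < p - 1 := by linarith
  have ha : (p-1) * (i * (c * DG)) ≤ (p-1) * (i * ((p - c - 1) * X)) := by
    have := mul_le_mul_of_nonneg_left h3 hi0
    nlinarith
  have hb : ((p - i) * (p-1)) * ((p - c) * DC) ≤ ((p - i) * (p-1)) * ((c - 1) * X) := by
    refine mul_le_mul_of_nonneg_left h1 ?_
    have : (0:ℝ) ≤ p - i := by linarith
    positivity
  have hcc : (p * (p-1)) * ((i - (p - c)) * DC) ≤ (p * (p-1)) * ((c - 1) * Y) := by
    refine mul_le_mul_of_nonneg_left h2 ?_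
    have h0p : (0:ℝ) < p := by linarith
    positivity
  have hd : (0:ℝ) ≤ (p - c) * ((p-1) * ((p - i) * X + p * Y)) := by
    have h1' : (0:ℝ) ≤ p - c := by linarith
    have h2' : (0:ℝ) ≤ p - i := by linarith
    have h3' : (0:ℝ) ≤ p := by linarith
    positivity
  have key : (p-1) * (i * c * (DC + DG + X)) ≤ (p-1) * (p * (p - 1) * (X + Y)) := by
    nlinarith [ha, hb, hcc, hd]
  exact le_of_mul_le_mul_left key hp1


/-- `dispSet d S` is the sum of `d u v` over all unordered pairs `{u,v}` of distinct
elements of `S` (for a symmetric `d` with `d u u = 0`, half the double sum). -/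
noncomputable def dispSet {U : Type*} (d : U → U → ℝ) (S : Finset U) : ℝ :=
  (∑ u ∈ S, ∑ v ∈ S, d u v) / 2

/-- Key inequality in the analysis of the greedy algorithm for max-sum diversification:
for every `O` with `|O| = p` and step `0 ≤ i ≤ p-1` with `C = O \ Gᵢ` of size at least
2, `Σ_{v∈C} [(1/2)(f(Gᵢ∪{v}) - f(Gᵢ)) + λ Σ_{u∈Gᵢ} d(v,u)] ≥
(1/2)f(O) - (1/2)f(G_p) + λ (i|C|/(p(p-1))) d(O)`. -/
theorem stmt_19 {U : Type*} [Fintype U] [DecidableEq U] (d : U → U → ℝ)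
    (hsymm : ∀ u v, d u v = d v u)
    (hnonneg : ∀ u v, 0 ≤ d u v)
    (hrefl : ∀ u, d u u = 0)
    (htri : ∀ u v w, d u w ≤ d u v + d v w)
    (f : Finset U → ℝ)
    (hf0 : f ∅ = 0)
    (hfnonneg : ∀ S, 0 ≤ f S)
    (hfmono : ∀ S T : Finset U, S ⊆ T → f S ≤ f T)
    (hfsub : ∀ (S T : Finset U) (u : U), S ⊆ T →
      f (insert u T) - f T ≤ f (insert u S) - f S)
    (lam : ℝ) (hlam : 0 ≤ lam)
    (p : ℕ) (hp : 2 ≤ p) (hUp : p ≤ Fintype.card U)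
    (G : ℕ → Finset U) (u : ℕ → U)
    (hG0 : G 0 = ∅)
    (hstep : ∀ i < p, u i ∉ G i ∧ G (i + 1) = insert (u i) (G i) ∧
      ∀ v ∉ G i,
        (1 / 2) * (f (insert v (G i)) - f (G i)) + lam * ∑ x ∈ G i, d v x ≤
        (1 / 2) * (f (insert (u i) (G i)) - f (G i)) + lam * ∑ x ∈ G i, d (u i) x)
    (O : Finset U) (hO : O.card = p)
    (i : ℕ) (hi : i ≤ p - 1) (hC : 2 ≤ (O \ G i).card) :
    ∑ v ∈ O \ G i,
        ((1 / 2) * (f (insert v (G i)) - f (G i)) + lam * ∑ x ∈ G i, d v x) ≥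
      (1 / 2) * f O - (1 / 2) * f (G p) +
        lam * ((i : ℝ) * (((O \ G i).card : ℝ)) / ((p : ℝ) * ((p : ℝ) - 1))) *
          dispSet d O := by
  have hip : i + 1 ≤ p := by omega
  -- cardinality and monotonicity of the greedy chain
  have hcard : ∀ j, j ≤ p → (G j).card = j := by
    intro j
    induction j with
    | zero => intro _; simp [hG0]
    | succ n ih =>
      intro h
      obtain ⟨h1, h2, _⟩ := hstep n (by omega)
      rw [h2, Finset.card_insert_of_notMem h1, ih (by omega)]
  have hsubGp : ∀ k, i + k ≤ p → G i ⊆ G (i + k) := by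
    intro k
    induction k with
    | zero => intro _; exact subset_rfl
    | succ n ih =>
      intro h
      obtain ⟨h1, h2, _⟩ := hstep (i + n) (by omega)
      rw [show i + (n + 1) = (i + n) + 1 from rfl, h2]
      exact (ih (by omega)).trans (Finset.subset_insert _ _)
  have hGip : G i ⊆ G p := by
    have h := hsubGp (p - i) (by omega)
    rwa [Nat.add_sub_cancel' (by omega)] at h
  set C : Finset U := O \ G i with hCdef
  set Og : Finset U := O ∩ G i with hOgdef
  set Z : Finset U := G i \ O with hZdef
  have hGicard : (G i).card = i := hcard i (by omega)
  have hcg : C.card + Og.card = p := by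
    rw [hCdef, hOgdef, Finset.card_sdiff_add_card_inter, hO]
  have hZg : Z.card + Og.card = i := by
    rw [hZdef, hOgdef, Finset.inter_comm O (G i), Finset.card_sdiff_add_card_inter,
      hGicard]
  have hgi : Og.card ≤ i := by omega
  -- f part
  have hOsub : O ⊆ G i ∪ C := by
    intro x hx
    by_cases h : x ∈ G i
    · exact Finset.mem_union_left _ h
    · exact Finset.mem_union_right _ (Finset.mem_sdiff.2 ⟨hx, h⟩)
  have hF : f O - f (G p) ≤ ∑ v ∈ C, (f (insert v (G i)) - f (G i)) := by
    have h1 := submod_sum f hfsub (G i) C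
    have h2 := hfmono O (G i ∪ C) hOsub
    have h3 := hfmono (G i) (G p) hGip
    linarith
  -- d part
  set DC : ℝ := ∑ v ∈ C, ∑ w ∈ C, d v w with hDCdef
  set DG : ℝ := ∑ x ∈ Og, ∑ w ∈ Og, d x w with hDGdef
  set Xc : ℝ := ∑ v ∈ C, ∑ x ∈ Og, d v x with hXcdef
  set Yc : ℝ := ∑ v ∈ C, ∑ x ∈ Z, d v x with hYcdef
  have hXnn : 0 ≤ Xc := Finset.sum_nonneg fun v _ => Finset.sum_nonneg fun x _ => hnonneg v x
  have hYnn : 0 ≤ Yc := Finset.sum_nonneg fun v _ => Finset.sum_nonneg fun x _ => hnonneg v x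
  have hDCnn : 0 ≤ DC := Finset.sum_nonneg fun v _ => Finset.sum_nonneg fun x _ => hnonneg v x
  have hDGnn : 0 ≤ DG := Finset.sum_nonneg fun v _ => Finset.sum_nonneg fun x _ => hnonneg v x
  have hXY : ∑ v ∈ C, ∑ x ∈ G i, d v x = Xc + Yc := by
    rw [hXcdef, hYcdef, ← Finset.sum_add_distrib]
    refine Finset.sum_congr rfl fun v hv => ?_
    rw [← Finset.sum_inter_add_sum_sdiff (G i) O (d v), Finset.inter_comm]
  have hcross : ∑ a ∈ Og, ∑ b ∈ C, d a b = Xc := by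
    rw [Finset.sum_comm, hXcdef]
    exact Finset.sum_congr rfl fun b hb => Finset.sum_congr rfl fun a ha => hsymm a b
  have hdisj : Disjoint C Og := by
    rw [hCdef, hOgdef]
    exact Finset.disjoint_of_subset_right Finset.inter_subset_right Finset.sdiff_disjoint
  have hOeq : O = C ∪ Og := by
    rw [hCdef, hOgdef, Finset.sdiff_union_inter]
  have hdispO : dispSet d O = (DC + DG + 2 * Xc) / 2 := by
    rw [dispSet, hOeq, Finset.sum_union hdisj]
    have e1 : ∀ a : U, ∑ b ∈ C ∪ Og, d a b = ∑ b ∈ C, d a b + ∑ b ∈ Og, d a b :=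
      fun a => Finset.sum_union hdisj
    simp only [e1]
    rw [Finset.sum_add_distrib, Finset.sum_add_distrib, hcross]
    rw [hDCdef, hDGdef, hXcdef]
    ring
  have hF3 := core_tri d hsymm hrefl htri C Og
  have hF4 := core_tri d hsymm hrefl htri C Z
  have hF2 := core_tri d hsymm hrefl htri Og C
  rw [hcross] at hF2
  have hpR : (2:ℝ) ≤ (p:ℝ) := by exact_mod_cast hp
  have hcR : (2:ℝ) ≤ (C.card:ℝ) := by exact_mod_cast hC
  have hcgR : (C.card:ℝ) + (Og.card:ℝ) = (p:ℝ) := by exact_mod_cast hcg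
  have hipR : (i:ℝ) + 1 ≤ (p:ℝ) := by exact_mod_cast hip
  have hgiR : (Og.card:ℝ) ≤ (i:ℝ) := by exact_mod_cast hgi
  have hZgR : (Z.card:ℝ) = (i:ℝ) - (Og.card:ℝ) := by
    have : (Z.card:ℝ) + (Og.card:ℝ) = (i:ℝ) := by exact_mod_cast hZg
    linarith
  rw [hZgR] at hF4
  have hkey : (i:ℝ) * (C.card:ℝ) * (DC / 2 + DG / 2 + Xc) ≤
      (p:ℝ) * ((p:ℝ) - 1) * (Xc + Yc) := by
    refine key_alg Xc Yc (DC / 2) (DG / 2) (C.card:ℝ) (Og.card:ℝ) (i:ℝ) (p:ℝ)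
      hXnn hYnn (by linarith) (by linarith) hcR (Nat.cast_nonneg _) hgiR hipR hcgR
      (by linarith) (by linarith) (by linarith)
  have hppos : (0:ℝ) < (p:ℝ) * ((p:ℝ) - 1) := by nlinarith
  have hd : (i:ℝ) * (C.card:ℝ) / ((p:ℝ) * ((p:ℝ) - 1)) * dispSet d O ≤ Xc + Yc := by
    rw [div_mul_eq_mul_div, div_le_iff₀ hppos, hdispO]
    have heq : (i:ℝ) * (C.card:ℝ) * ((DC + DG + 2 * Xc) / 2) =
        (i:ℝ) * (C.card:ℝ) * (DC / 2 + DG / 2 + Xc) := by ring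
    rw [heq]
    linarith [hkey]
  rw [ge_iff_le]
  have hsum : ∑ v ∈ C, ((1 / 2) * (f (insert v (G i)) - f (G i)) + lam * ∑ x ∈ G i, d v x)
      = (1 / 2) * (∑ v ∈ C, (f (insert v (G i)) - f (G i))) +
        lam * (∑ v ∈ C, ∑ x ∈ G i, d v x) := by
    rw [Finset.sum_add_distrib, Finset.mul_sum, Finset.mul_sum]
  rw [hsum, hXY]
  have hlam' : lam * ((i:ℝ) * (C.card:ℝ) / ((p:ℝ) * ((p:ℝ) - 1)) * dispSet d O) ≤
      lam * (Xc + Yc) := mul_le_mul_of_nonneg_left hd hlam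
  have : lam * ((i:ℝ) * (C.card:ℝ) / ((p:ℝ) * ((p:ℝ) - 1))) * dispSet d O =
      lam * ((i:ℝ) * (C.card:ℝ) / ((p:ℝ) * ((p:ℝ) - 1)) * dispSet d O) := by ring
  rw [this]
  linarith
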